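/- arXiv:2004.00311 — 2 statements merged into one kernel-verified Lean document; each statement's English description precedes it below -/
import Mathlib

section
/- Cayley's formula: the number of labeled trees on n vertices (equivalently, the number of minimally connected graphs, i.e. spanning trees of the complete graph K_n) equals n^{n-2} for n ≥ 1. -/
open SimpleGraph Finset

namespace Cayley

/-- Partial inverse to `Fin.succAbove ℓ`. -/
noncomputable def unAbove {n : ℕ} (ℓ x : Fin (n + 2)) : Fin (n + 1) :=
  if h : ∃ z, ℓ.succAbove z = x then h.choose else 0

lemma succAbove_unAbove {n : ℕ} {ℓ x : Fin (n + 2)} (h : x ≠ ℓ) :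
    ℓ.succAbove (unAbove ℓ x) = x := by
  have h' : ∃ z, ℓ.succAbove z = x := Fin.exists_succAbove_eq h
  rw [unAbove, dif_pos h']
  exact h'.choose_spec

lemma unAbove_succAbove {n : ℕ} (ℓ : Fin (n + 2)) (y : Fin (n + 1)) :
    unAbove ℓ (ℓ.succAbove y) = y := by
  apply Fin.succAbove_right_injective (p := ℓ)
  exact succAbove_unAbove (Fin.succAbove_ne ℓ y)

variable {n : ℕ}

/-- In a connected graph with at least two vertices every vertex has an edge. -/
lemma degree_pos_of_connected {V : Type*} [Fintype V] {G : SimpleGraph V}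
    [DecidableRel G.Adj] (hG : G.Connected) (h2 : 2 ≤ Fintype.card V) (v : V) :
    0 < G.degree v := by
  rw [degree_pos_iff_exists_adj]
  obtain ⟨w, hw⟩ := Fintype.exists_ne_of_one_lt_card h2 v
  obtain ⟨p⟩ := hG.preconnected v w
  cases p with
  | nil => exact absurd rfl hw.symm
  | cons h p => exact ⟨_, h⟩

/-- A tree with at least two vertices has a leaf. -/
lemma exists_leaf {V : Type*} [Fintype V] {G : SimpleGraph V}
    [DecidableRel G.Adj] (hG : G.IsTree) (h2 : 2 ≤ Fintype.card V) :
    ∃ v, G.degree v = 1 := by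
  by_contra hc
  push_neg at hc
  have h1 : ∀ v, 2 ≤ G.degree v := by
    intro v
    have := degree_pos_of_connected hG.isConnected h2 v
    have := hc v
    omega
  have hsum : ∑ v : V, G.degree v = 2 * #G.edgeFinset :=
    G.sum_degrees_eq_twice_card_edges
  have hedge : #G.edgeFinset + 1 = Fintype.card V := hG.card_edgeFinset
  have : 2 * Fintype.card V ≤ ∑ v : V, G.degree v := by
    calc 2 * Fintype.card V = ∑ _v : V, 2 := by simp [mul_comm]
    _ ≤ ∑ v : V, G.degree v := Finset.sum_le_sum fun v _ => h1 v
  omega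


section Walks

variable {V W : Type*} {G : SimpleGraph W} {f : V → W}

/-- Transfer a walk avoiding everything outside the range of `f` down to `G.comap f`. -/
lemma walk_down (hf : Function.Injective f) {u v : W} (p : G.Walk u v)
    (hp : ∀ x ∈ p.support, ∃ x', f x' = x) {u' v' : V} (hu : f u' = u) (hv : f v' = v) :
    ∃ q : (G.comap f).Walk u' v',
      q.support.map f = p.support ∧ q.edges.map (Sym2.map f) = p.edges := by
  induction p generalizing u' with
  | nil =>
    obtain rfl : u' = v' := hf (hu.trans hv.symm)
    subst hu
    exact ⟨.nil, by simp, by simp⟩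
  | @cons u w v h p ih =>
    obtain ⟨w', hw⟩ := hp w (by simp)
    have hadj : (G.comap f).Adj u' w' := by
      simp only [comap_adj, hu, hw]; exact h
    obtain ⟨q, hq1, hq2⟩ := ih (fun x hx => hp x (by simp [hx])) hw hv
    exact ⟨.cons hadj q, by simp [hq1, hu], by simp [hq2, hu, hw]⟩

/-- A path between two vertices different from `ℓ` avoids `ℓ` if `ℓ` has a unique
neighbour. -/
lemma path_avoids {ℓ a : W} (hu : ∀ y, G.Adj ℓ y → y = a)
    {u v : W} (p : G.Walk u v) (hp : p.IsPath) (h1 : u ≠ ℓ) (h2 : v ≠ ℓ) :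
    ℓ ∉ p.support := by
  induction p with
  | nil => simpa using h1.symm
  | @cons u w v h p ih =>
    rw [SimpleGraph.Walk.support_cons]
    simp only [List.mem_cons]
    push_neg
    refine ⟨h1.symm, ?_⟩
    by_cases hw : w = ℓ
    · subst hw
      -- then u = a, and p starts with an edge from w to a = u, contradicting IsPath
      have hua : u = a := hu u h.symm
      cases p with
      | nil => exact absurd rfl h2
      | @cons w y v h2' p' =>
        have hya : y = a := hu y h2'
        exfalso
        have : u ∉ (SimpleGraph.Walk.cons h2' p').support :=
          ((SimpleGraph.Walk.cons_isPath_iff _ _).mp hp).2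
        apply this
        rw [SimpleGraph.Walk.support_cons]
        exact List.mem_cons_of_mem _ (hua ▸ hya ▸ p'.start_mem_support)
    · exact ih (hp.of_cons) hw h2

/-- every non-nil walk into `y` uses the edge `s(y,a)` when `a` is the unique
neighbour of `y`. -/
lemma edge_mem_of_walk_to {a : W} {x y : W} (q : G.Walk x y) (hq : ¬ q.Nil)
    (hu : ∀ z, G.Adj y z → z = a) : s(y, a) ∈ q.edges := by
  induction q with
  | nil => simp at hq
  | @cons x w v h p ih =>
    by_cases hp : p.Nil
    · have hwv : w = v := hp.eq
      subst hwv
      have : x = a := hu x h.symm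
      subst this
      rw [SimpleGraph.Walk.edges_cons]
      exact List.mem_cons.mpr (Or.inl (Sym2.eq_swap))
    · rw [SimpleGraph.Walk.edges_cons]
      exact List.mem_cons_of_mem _ (ih hp hu)

/-- No cycle passes through a vertex with a unique neighbour. -/
lemma not_mem_cycle [DecidableEq W] {ℓ a : W} (hu : ∀ y, G.Adj ℓ y → y = a)
    {v : W} (c : G.Walk v v) (hc : c.IsCycle) : ℓ ∉ c.support := by
  intro hmem
  obtain ⟨c', hc'⟩ : ∃ c' : G.Walk ℓ ℓ, c'.IsCycle := ⟨c.rotate ℓ hmem, hc.rotate hmem⟩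
  cases c' with
  | nil => exact hc'.not_of_nil
  | @cons u w v h q =>
    have hw : w = a := hu w h
    have hqnil : ¬ q.Nil := by
      intro hnil
      have : w = ℓ := by
        cases q with
        | nil => rfl
        | cons _ _ => simp [SimpleGraph.Walk.Nil] at hnil
      exact (G.irrefl (this ▸ h))
    have hedge : s(ℓ, a) ∈ q.edges := edge_mem_of_walk_to q hqnil hu
    have hnodup := hc'.edges_nodup
    rw [SimpleGraph.Walk.edges_cons] at hnodup
    subst hw
    exact (List.nodup_cons.mp hnodup).1 hedge

end Walks


open scoped Classical

section Master

variable {n : ℕ}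

lemma degree_comap (G : SimpleGraph (Fin (n + 2))) (ℓ : Fin (n + 2)) (x : Fin (n + 1)) :
    (G.comap ℓ.succAbove).degree x = ((G.neighborFinset (ℓ.succAbove x)).erase ℓ).card := by
  rw [← card_neighborFinset_eq_degree]
  refine Finset.card_bij (fun y _ => ℓ.succAbove y) ?_ ?_ ?_
  · intro y hy
    rw [mem_neighborFinset] at hy
    exact Finset.mem_erase.mpr ⟨Fin.succAbove_ne ℓ y, (mem_neighborFinset _ _ _).mpr hy⟩
  · intro y _ z _ h
    exact Fin.succAbove_right_injective h
  · intro z hz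
    obtain ⟨hz1, hz2⟩ := Finset.mem_erase.mp hz
    obtain ⟨z', rfl⟩ := Fin.exists_succAbove_eq hz1
    refine ⟨z', ?_, rfl⟩
    rw [mem_neighborFinset] at hz2 ⊢
    exact hz2

/-- The master lemma: if `ℓ` has unique neighbour `a` then `G` is a tree iff deleting `ℓ`
gives a tree. -/
lemma isTree_comap_iff {G : SimpleGraph (Fin (n + 1))} {ℓ a : Fin (n + 1)}
    (hadj : G.Adj ℓ a) (hu : ∀ y, G.Adj ℓ y → y = a) :
    G.IsTree ↔ (G.comap ℓ.succAbove).IsTree := by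
  have hinj : Function.Injective (ℓ.succAbove) := Fin.succAbove_right_injective
  have hne : a ≠ ℓ := hadj.ne'
  have hn : 0 < n := by
    rcases n with _ | n
    · exact absurd (Fin.eq_of_val_eq (by omega)) hne
    · omega
  obtain ⟨a', ha'⟩ := Fin.exists_succAbove_eq hne
  let f : (G.comap ℓ.succAbove) →g G := ⟨ℓ.succAbove, fun {x y} h => h⟩
  constructor
  · intro hT
    constructor
    · rw [connected_iff]
      refine ⟨?_, Fin.pos_iff_nonempty.mp hn⟩
      intro u' v'
      obtain ⟨p0⟩ := hT.isConnected.preconnected (ℓ.succAbove u') (ℓ.succAbove v')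
      have hpath := p0.bypass_isPath
      have havoid : ℓ ∉ p0.bypass.support :=
        path_avoids hu p0.bypass hpath (Fin.succAbove_ne ℓ u') (Fin.succAbove_ne ℓ v')
      obtain ⟨q, -, -⟩ := walk_down hinj p0.bypass
        (fun x hx => Fin.exists_succAbove_eq (fun h => havoid (h ▸ hx))) rfl rfl
      exact q.reachable
    · intro v' c hc
      exact hT.IsAcyclic (c.map f)
        ((SimpleGraph.Walk.map_isCycle_iff_of_injective hinj).mpr hc)
  · intro hT'
    constructor
    · rw [connected_iff]
      refine ⟨?_, inferInstance⟩
      have key : ∀ x, G.Reachable x a := by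
        intro x
        by_cases hx : x = ℓ
        · exact hx ▸ hadj.reachable
        · obtain ⟨x', rfl⟩ := Fin.exists_succAbove_eq hx
          have h := (hT'.isConnected.preconnected x' a').map f
          have hfx : f x' = ℓ.succAbove x' := rfl
          have hfa : f a' = a := ha'
          rwa [hfx, hfa] at h
      exact fun u v => (key u).trans (key v).symm
    · intro v c hc
      have havoid : ℓ ∉ c.support := not_mem_cycle hu c hc
      have hv : v ≠ ℓ := fun h => havoid (h ▸ c.start_mem_support)
      obtain ⟨v', rfl⟩ := Fin.exists_succAbove_eq hv
      obtain ⟨q, hsup, hedg⟩ := walk_down hinj c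
        (fun x hx => Fin.exists_succAbove_eq (fun h => havoid (h ▸ hx))) rfl rfl
      refine hT'.IsAcyclic q ?_
      rw [SimpleGraph.Walk.isCycle_def, SimpleGraph.Walk.isTrail_def]
      refine ⟨?_, ?_, ?_⟩
      · exact (hedg ▸ hc.edges_nodup : (q.edges.map (Sym2.map ℓ.succAbove)).Nodup).of_map
      · intro hq
        apply hc.ne_nil
        rw [SimpleGraph.Walk.nil_iff_eq_nil.symm, SimpleGraph.Walk.nil_iff_support_eq,
          ← hsup, hq]
        simp
      · have : c.support.tail = (q.support.tail).map ℓ.succAbove := by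
          rw [← hsup]
          cases q.support <;> simp
        have h2 := hc.2
        rw [this] at h2
        exact h2.of_map

end Master


section Defs

noncomputable def minLeaf {n : ℕ} (G : SimpleGraph (Fin (n + 1))) : Fin (n + 1) :=
  if h : ((Finset.univ : Finset (Fin (n + 1))).filter (fun v => G.degree v = 1)).Nonempty
  then (Finset.univ.filter (fun v => G.degree v = 1)).min' h else 0

noncomputable def minNbr {n : ℕ} (G : SimpleGraph (Fin (n + 1))) (ℓ : Fin (n + 1)) :
    Fin (n + 1) :=
  if h : (G.neighborFinset ℓ).Nonempty then (G.neighborFinset ℓ).min' h else 0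

noncomputable def code : {n : ℕ} → SimpleGraph (Fin n) → List (Fin n)
  | 0, _ => []
  | 1, _ => []
  | 2, _ => []
  | (n + 3), G =>
    let ℓ := minLeaf G
    minNbr G ℓ :: (code (G.comap ℓ.succAbove)).map ℓ.succAbove

noncomputable def decode : {n : ℕ} → List (Fin n) → SimpleGraph (Fin n)
  | 0, _ => ⊥
  | 1, _ => ⊥
  | 2, _ => SimpleGraph.edge 0 1
  | (n + 3), [] => ⊥
  | (n + 3), (a :: rest) =>
    let s : Finset (Fin (n + 3)) := (a :: rest).toFinset
    let ℓ : Fin (n + 3) := if h : sᶜ.Nonempty then sᶜ.min' h else 0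
    ((decode (rest.map (unAbove ℓ))).map ℓ.succAboveEmb) ⊔ SimpleGraph.edge ℓ a

lemma code_succ {n : ℕ} (G : SimpleGraph (Fin (n + 3))) :
    code G = minNbr G (minLeaf G) ::
      (code (G.comap (minLeaf G).succAbove)).map (minLeaf G).succAbove := rfl

lemma decode_cons {n : ℕ} (a : Fin (n + 3)) (rest : List (Fin (n + 3)))
    (ℓ : Fin (n + 3)) (hℓ : ℓ = if h : ((a :: rest).toFinset)ᶜ.Nonempty
      then ((a :: rest).toFinset)ᶜ.min' h else 0) :
    decode (a :: rest) =
      ((decode (rest.map (unAbove ℓ))).map ℓ.succAboveEmb) ⊔ SimpleGraph.edge ℓ a := by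
  subst hℓ; rfl

end Defs


section Main

lemma degree_congr {V : Type*} [Fintype V] {G H : SimpleGraph V} (h : G = H) (x : V) :
    G.degree x = H.degree x := by subst h; rfl

lemma min'_congr {α : Type*} [LinearOrder α] {s t : Finset α} (h : s = t) (hs : s.Nonempty) :
    s.min' hs = t.min' (h ▸ hs) := by subst h; rfl

lemma degree_comap' {n : ℕ} (G : SimpleGraph (Fin (n + 2))) (ℓ : Fin (n + 2)) (x : Fin (n + 1))
    (z : Fin (n + 2)) (hz : ℓ.succAbove x = z) :
    (G.comap ℓ.succAbove).degree x = ((G.neighborFinset z).erase ℓ).card := by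
  subst hz; exact degree_comap G ℓ x

/-- Reconstruction of a graph from the removal of the leaf `ℓ`. -/
lemma reconstruct {n : ℕ} {G : SimpleGraph (Fin (n + 1))} {ℓ a : Fin (n + 1)}
    (hadj : G.Adj ℓ a) (hu : ∀ y, G.Adj ℓ y → y = a) :
    ((G.comap ℓ.succAbove).map ℓ.succAboveEmb) ⊔ SimpleGraph.edge ℓ a = G := by
  ext x y
  simp only [sup_adj, SimpleGraph.map_adj, comap_adj, Fin.succAboveEmb, Function.Embedding.coeFn_mk,
    SimpleGraph.edge_adj]
  constructor
  · rintro (⟨-, x', y', h, rfl, rfl⟩ | ⟨(⟨rfl, rfl⟩ | ⟨rfl, rfl⟩), -⟩)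
    · exact h
    · exact hadj
    · exact hadj.symm
  · intro h
    by_cases hx : x = ℓ
    · subst hx
      exact Or.inr ⟨Or.inl ⟨rfl, hu y h⟩, h.ne⟩
    · by_cases hy : y = ℓ
      · subst hy
        exact Or.inr ⟨Or.inr ⟨hu x h.symm, rfl⟩, h.ne⟩
      · obtain ⟨x', rfl⟩ := Fin.exists_succAbove_eq hx
        obtain ⟨y', rfl⟩ := Fin.exists_succAbove_eq hy
        exact Or.inl ⟨h.ne, x', y', h, rfl, rfl⟩

theorem thmA : ∀ (n : ℕ) (G : SimpleGraph (Fin (n + 1))), G.IsTree →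
    (code G).length = (n + 1) - 2 ∧ (∀ x, x ∈ code G ↔ 2 ≤ G.degree x) ∧
      decode (code G) = G
  | 0, G, hG => by
    refine ⟨rfl, ?_, ?_⟩
    · intro x
      have h := G.degree_lt_card_verts x
      simp only [Fintype.card_fin] at h
      have hc : code G = ([] : List (Fin 1)) := rfl
      rw [hc]
      constructor
      · intro hx; exact absurd hx List.not_mem_nil
      · intro hdeg
        exact absurd hdeg (by omega)
    · have hbot : G = ⊥ := by
        ext x y
        simp only [bot_adj, iff_false]
        intro h
        exact h.ne (by
          apply Fin.ext
          have := x.isLt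
          have := y.isLt
          omega)
      show decode ([] : List (Fin 1)) = G
      rw [hbot]
      rfl
  | 1, G, hG => by
    have h01 : G.Adj 0 1 := by
      obtain ⟨p⟩ := hG.isConnected.preconnected 0 1
      cases p with
      | @cons _ w _ h p =>
        have hw : w = 1 := by
          apply Fin.ext
          have h2 := w.isLt
          have h0 : w.val ≠ 0 := fun hh => h.ne' (Fin.ext hh.symm).symm
          simp only [Fin.val_one]
          omega
        exact hw ▸ h
    have hedge : G = SimpleGraph.edge 0 1 := by
      ext x y
      rw [SimpleGraph.edge_adj]
      constructor
      · intro h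
        have hxy : x ≠ y := h.ne
        fin_cases x <;> fin_cases y <;> simp_all
      · rintro ⟨(⟨rfl, rfl⟩ | ⟨rfl, rfl⟩), -⟩
        · exact h01
        · exact h01.symm
    refine ⟨rfl, ?_, ?_⟩
    · intro x
      have h := G.degree_lt_card_verts x
      simp only [Fintype.card_fin] at h
      have hc : code G = ([] : List (Fin 2)) := rfl
      rw [hc]
      constructor
      · intro hx; exact absurd hx List.not_mem_nil
      · intro hdeg
        exact absurd hdeg (by omega)
    · show decode ([] : List (Fin 2)) = G
      rw [hedge]
      rfl
  | (n + 2), G, hG => by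
    -- the minimal leaf
    obtain ⟨ℓ₀, hℓ₀⟩ := exists_leaf hG (by simp)
    have hS : ((Finset.univ : Finset (Fin (n + 3))).filter (fun v => G.degree v = 1)).Nonempty :=
      ⟨ℓ₀, by simp [hℓ₀]⟩
    have hℓ : minLeaf G = (Finset.univ.filter (fun v => G.degree v = 1)).min' hS := dif_pos hS
    set ℓ := minLeaf G with hℓdef
    have hdegℓ : G.degree ℓ = 1 := by
      have := Finset.min'_mem _ hS
      rw [← hℓ] at this
      simpa using this
    obtain ⟨a, ha⟩ : ∃ a, G.neighborFinset ℓ = {a} := by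
      apply Finset.card_eq_one.mp
      rwa [card_neighborFinset_eq_degree]
    have hadj : G.Adj ℓ a := by
      rw [← mem_neighborFinset, ha]; exact Finset.mem_singleton_self a
    have hu : ∀ y, G.Adj ℓ y → y = a := by
      intro y hy
      have : y ∈ G.neighborFinset ℓ := (mem_neighborFinset _ _ _).mpr hy
      rw [ha] at this
      exact Finset.mem_singleton.mp this
    have hminNbr : minNbr G ℓ = a := by
      rw [minNbr, ha]
      rw [dif_pos ⟨a, Finset.mem_singleton_self a⟩]
      exact Finset.min'_singleton a
    have hG' : (G.comap ℓ.succAbove).IsTree := (isTree_comap_iff hadj hu).mp hG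
    obtain ⟨ihlen, ihmem, ihdec⟩ := thmA (n + 1) (G.comap ℓ.succAbove) hG'
    have hcode : code G = a :: (code (G.comap ℓ.succAbove)).map ℓ.succAbove := by
      rw [code_succ, hminNbr]
    -- degree facts
    have hane : a ≠ ℓ := hadj.ne'
    obtain ⟨a', ha'⟩ := Fin.exists_succAbove_eq hane
    have hdega' : (G.comap ℓ.succAbove).degree a' = G.degree a - 1 := by
      rw [degree_comap' G ℓ a' a ha',
        Finset.card_erase_of_mem ((mem_neighborFinset _ _ _).mpr hadj.symm),
        card_neighborFinset_eq_degree]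
    have hdega'pos : 0 < (G.comap ℓ.succAbove).degree a' :=
      degree_pos_of_connected hG'.isConnected (by simp) a'
    have hdega : 2 ≤ G.degree a := by
      have : 0 < G.degree a := degree_pos_of_connected hG.isConnected (by simp) a
      omega
    have hdeg_other : ∀ x' : Fin (n + 2), ℓ.succAbove x' ≠ a →
        (G.comap ℓ.succAbove).degree x' = G.degree (ℓ.succAbove x') := by
      intro x' hx'
      rw [degree_comap' G ℓ x' _ rfl,
        Finset.erase_eq_of_notMem, card_neighborFinset_eq_degree]
      intro hmem
      exact hx' (hu _ ((mem_neighborFinset _ _ _).mp hmem).symm)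
    -- entry characterization
    have hment : ∀ x, x ∈ code G ↔ 2 ≤ G.degree x := by
      intro x
      rw [hcode]
      by_cases hx : x = ℓ
      · subst hx
        simp only [List.mem_cons, List.mem_map]
        constructor
        · rintro (rfl | ⟨y, -, hy⟩)
          · exact absurd rfl hane
          · exact absurd hy (Fin.succAbove_ne ℓ y)
        · intro h; omega
      · by_cases hxa : x = a
        · subst hxa
          simp only [List.mem_cons]
          exact ⟨fun _ => hdega, fun _ => by simp⟩
        · obtain ⟨x', rfl⟩ := Fin.exists_succAbove_eq hx
          rw [← hdeg_other x' hxa]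
          erw [← ihmem x']
          simp only [List.mem_cons, List.mem_map]
          constructor
          · rintro (h | ⟨y, hy, h⟩)
            · exact absurd h hxa
            · rwa [← Fin.succAbove_right_injective h]
          · intro h
            exact Or.inr ⟨x', h, rfl⟩
    refine ⟨by simp [hcode, ihlen], hment, ?_⟩
    -- decode (code G) = G
    have hdegpos : ∀ x, 0 < G.degree x :=
      degree_pos_of_connected hG.isConnected (by simp)
    have hset : ((a :: (code (G.comap ℓ.succAbove)).map ℓ.succAbove).toFinset)ᶜ =
        Finset.univ.filter (fun v => G.degree v = 1) := by
      ext x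
      rw [Finset.mem_compl, List.mem_toFinset, ← hcode]
      have h1 := hment x
      have h2 := hdegpos x
      simp only [Finset.mem_filter, Finset.mem_univ, true_and]
      constructor
      · intro hx
        have h3 : ¬ 2 ≤ G.degree x := fun h => hx (h1.mpr h)
        omega
      · intro hx hmem
        have := h1.mp hmem
        omega
    have hsne : ((a :: (code (G.comap ℓ.succAbove)).map ℓ.succAbove).toFinset)ᶜ.Nonempty := by
      rw [hset]; exact hS
    have hmin : ((a :: (code (G.comap ℓ.succAbove)).map ℓ.succAbove).toFinset)ᶜ.min' hsne
        = ℓ := by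
      exact (min'_congr hset hsne).trans hℓ.symm
    rw [hcode, decode_cons a _ ℓ (by rw [dif_pos hsne]; exact hmin.symm)]
    have hmapback : ((code (G.comap ℓ.succAbove)).map ℓ.succAbove).map (unAbove ℓ)
        = code (G.comap ℓ.succAbove) := by
      rw [List.map_map]
      have : ∀ y ∈ code (G.comap ℓ.succAbove), (unAbove ℓ ∘ ℓ.succAbove) y = id y :=
        fun y _ => unAbove_succAbove ℓ y
      rw [List.map_congr_left this, List.map_id]
    rw [hmapback, ihdec]
    exact reconstruct hadj hu

end Main

theorem thmB : ∀ (n : ℕ) (c : List (Fin (n + 1))), c.length = (n + 1) - 2 →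
    (decode c).IsTree ∧ code (decode c) = c
  | 0, c, hc => by
    have hnil : c = [] := List.length_eq_zero_iff.mp hc
    subst hnil
    refine ⟨⟨?_, ?_⟩, rfl⟩
    · show (⊥ : SimpleGraph (Fin 1)).Connected
      rw [connected_iff]
      refine ⟨fun u v => ?_, inferInstance⟩
      have : u = v := by
        apply Fin.ext
        have := u.isLt; have := v.isLt
        omega
      exact this ▸ Reachable.refl u
    · exact isAcyclic_bot
  | 1, c, hc => by
    have hnil : c = [] := List.length_eq_zero_iff.mp hc
    subst hnil
    have hadj : (SimpleGraph.edge (0 : Fin 2) 1).Adj 0 1 := by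
      rw [SimpleGraph.edge_adj]
      exact ⟨Or.inl ⟨rfl, rfl⟩, by decide⟩
    refine ⟨⟨?_, ?_⟩, rfl⟩
    · show (SimpleGraph.edge (0 : Fin 2) 1).Connected
      rw [connected_iff]
      refine ⟨fun u v => ?_, inferInstance⟩
      fin_cases u <;> fin_cases v
      · exact Reachable.refl _
      · exact hadj.reachable
      · exact hadj.symm.reachable
      · exact Reachable.refl _
    · intro v w hw
      have h3 := hw.three_le_length
      have hnd := hw.2
      have hlen : w.support.tail.length = w.length := by
        have h1 := w.length_support
        have h2 : w.support.tail.length = w.support.length - 1 := List.length_tail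
        omega
      have hle := List.Nodup.length_le_card hnd
      rw [hlen] at hle
      simp only [Fintype.card_fin] at hle
      omega
  | (n + 2), c, hc => by
    match c, hc with
    | (a :: rest), hc =>
    have hrest : rest.length = n := by
      simp only [List.length_cons] at hc
      omega
    have hsne : (((a :: rest).toFinset : Finset (Fin (n + 3))))ᶜ.Nonempty := by
      rw [← Finset.card_pos, Finset.card_compl]
      have h1 := (a :: rest).toFinset_card_le
      simp only [List.length_cons, hrest] at h1
      simp only [Fintype.card_fin]
      omega
    set ℓ := (((a :: rest).toFinset : Finset (Fin (n + 3))))ᶜ.min' hsne with hℓdef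
    have hℓc : ℓ ∉ a :: rest := by
      have := Finset.min'_mem _ hsne
      rw [← hℓdef, Finset.mem_compl, List.mem_toFinset] at this
      exact this
    have hℓa : ℓ ≠ a := fun h => hℓc (h ▸ List.mem_cons_self)
    have hℓrest : ℓ ∉ rest := fun h => hℓc (List.mem_cons_of_mem a h)
    have hrest' : (rest.map (unAbove ℓ)).length = (n + 1) + 1 - 2 := by
      simp [hrest]
    obtain ⟨htree', hcode'⟩ := thmB (n + 1) (rest.map (unAbove ℓ)) hrest'
    have hmapback : (rest.map (unAbove ℓ)).map ℓ.succAbove = rest := by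
      rw [List.map_map]
      have : ∀ y ∈ rest, (ℓ.succAbove ∘ unAbove ℓ) y = id y := fun y hy =>
        succAbove_unAbove (fun h => hℓrest (h ▸ hy))
      rw [List.map_congr_left this, List.map_id]
    have hdec : decode (a :: rest) =
        ((decode (rest.map (unAbove ℓ))).map ℓ.succAboveEmb) ⊔ SimpleGraph.edge ℓ a :=
      decode_cons a rest ℓ (by rw [dif_pos hsne])
    set G := ((decode (rest.map (unAbove ℓ))).map ℓ.succAboveEmb) ⊔ SimpleGraph.edge ℓ a
      with hGdef
    clear_value G
    have hadj : G.Adj ℓ a := by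
      rw [hGdef]
      refine Or.inr ?_
      rw [SimpleGraph.edge_adj]
      exact ⟨Or.inl ⟨rfl, rfl⟩, hℓa⟩
    have hu : ∀ y, G.Adj ℓ y → y = a := by
      intro y hy
      rw [hGdef] at hy
      rcases hy with ⟨-, x', y', h, hx, hy⟩ | hy
      · exact absurd hx (Fin.succAbove_ne ℓ x')
      · rw [SimpleGraph.edge_adj] at hy
        rcases hy with ⟨(⟨-, h2⟩ | ⟨h1, -⟩), -⟩
        · exact h2
        · exact absurd h1 hℓa
    have hcomap : G.comap ℓ.succAbove = decode (rest.map (unAbove ℓ)) := by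
      ext x y
      simp only [comap_adj, hGdef, sup_adj, SimpleGraph.map_adj, Fin.succAboveEmb,
        Function.Embedding.coeFn_mk, SimpleGraph.edge_adj]
      constructor
      · rintro (⟨-, x', y', h, hx, hy⟩ | ⟨(⟨hx, -⟩ | ⟨-, hy⟩), -⟩)
        · obtain rfl : x' = x := Fin.succAbove_right_injective hx
          obtain rfl : y' = y := Fin.succAbove_right_injective hy
          exact h
        · exact absurd hx (Fin.succAbove_ne ℓ x)
        · exact absurd hy (Fin.succAbove_ne ℓ y)
      · intro h
        exact Or.inl ⟨fun he => h.ne (Fin.succAbove_right_injective he), x, y, h, rfl, rfl⟩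
    have htree : G.IsTree := by
      rw [isTree_comap_iff hadj hu, hcomap]
      exact htree'
    refine ⟨by rw [hdec]; exact htree, ?_⟩
    rw [hdec]
    -- now compute `code G`
    have hnbr : G.neighborFinset ℓ = {a} := by
      ext y
      rw [mem_neighborFinset, Finset.mem_singleton]
      exact ⟨hu y, fun h => h ▸ hadj⟩
    have hdegℓ : G.degree ℓ = 1 := by
      rw [← card_neighborFinset_eq_degree, hnbr, Finset.card_singleton]
    obtain ⟨a', ha'⟩ := Fin.exists_succAbove_eq (Ne.symm hℓa)
    have hdega'1 : (G.comap ℓ.succAbove).degree a' = G.degree a - 1 :=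
      (degree_comap' G ℓ a' a ha').trans (by
        rw [Finset.card_erase_of_mem ((mem_neighborFinset _ _ _).mpr hadj.symm),
          card_neighborFinset_eq_degree])
    have hdega'pos : 0 < (G.comap ℓ.succAbove).degree a' := by
      erw [degree_congr hcomap a']
      exact degree_pos_of_connected htree'.isConnected (by simp) a'
    have hdega : 2 ≤ G.degree a := by omega
    have hdeg_other : ∀ x' : Fin (n + 2), ℓ.succAbove x' ≠ a →
        (G.comap ℓ.succAbove).degree x' = G.degree (ℓ.succAbove x') := by
      intro x' hx'
      refine (degree_comap' G ℓ x' _ rfl).trans ?_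
      rw [Finset.erase_eq_of_notMem, card_neighborFinset_eq_degree]
      intro hmem
      exact hx' (hu _ ((mem_neighborFinset _ _ _).mp hmem).symm)
    have hdegpos : ∀ x, 0 < G.degree x :=
      degree_pos_of_connected htree.isConnected (by simp)
    obtain ⟨-, ihmem, -⟩ := thmA (n + 1) (decode (rest.map (unAbove ℓ))) htree'
    rw [hcode'] at ihmem
    -- the leaves of G are exactly the complement of the entries of the code
    have hfilter : (Finset.univ : Finset (Fin (n + 3))).filter (fun v => G.degree v = 1) =
        ((a :: rest).toFinset)ᶜ := by
      ext x
      simp only [Finset.mem_filter, Finset.mem_univ, true_and, Finset.mem_compl,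
        List.mem_toFinset]
      by_cases hx : x = ℓ
      · subst hx
        exact ⟨fun _ => hℓc, fun _ => hdegℓ⟩
      · by_cases hxa : x = a
        · constructor
          · intro h
            rw [hxa] at h
            omega
          · intro h
            exact absurd (List.mem_cons.mpr (Or.inl hxa)) h
        · obtain ⟨x', rfl⟩ := Fin.exists_succAbove_eq hx
          have hdx : (decode (rest.map (unAbove ℓ))).degree x' = G.degree (ℓ.succAbove x') :=
            (degree_congr hcomap.symm x').trans (hdeg_other x' hxa)
          have hmem : ℓ.succAbove x' ∈ rest ↔ x' ∈ rest.map (unAbove ℓ) := by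
            conv_lhs => rw [← hmapback]
            rw [List.mem_map]
            constructor
            · rintro ⟨y, hy, h⟩
              obtain rfl : y = x' := Fin.succAbove_right_injective h
              exact hy
            · intro h; exact ⟨x', h, rfl⟩
          have hpos : 0 < G.degree (ℓ.succAbove x') := hdegpos _
          have hiff : x' ∈ rest.map (unAbove ℓ) ↔ 2 ≤ G.degree (ℓ.succAbove x') := by
            rw [ihmem x', hdx]
          constructor
          · intro h hmem'
            rcases List.mem_cons.mp hmem' with h1 | h1
            · exact hxa h1
            · have := hiff.mp (hmem.mp h1)
              omega
          · intro h
            have h2 : ℓ.succAbove x' ∉ rest := fun hr => h (List.mem_cons_of_mem a hr)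
            have h3 : ¬ (2 ≤ G.degree (ℓ.succAbove x')) := fun hh =>
              h2 (hmem.mpr (hiff.mpr hh))
            omega
    have hminLeaf : minLeaf G = ℓ := by
      have hne : ((Finset.univ : Finset (Fin (n + 3))).filter
          (fun v => G.degree v = 1)).Nonempty := by
        rw [hfilter]; exact hsne
      rw [minLeaf, dif_pos hne]
      exact (min'_congr hfilter hne).trans hℓdef.symm
    have hminNbr : minNbr G ℓ = a := by
      rw [minNbr, hnbr]
      rw [dif_pos ⟨a, Finset.mem_singleton_self a⟩]
      exact Finset.min'_singleton a
    rw [code_succ, hminLeaf, hminNbr, hcomap, hcode', hmapback]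

end Cayley

/-- Cayley's formula: the number of labeled trees on `n ≥ 1` vertices
(connected acyclic simple graphs on `{1,…,n}`) equals `n^(n-2)`. -/
theorem cayley_formula (n : ℕ) (hn : 1 ≤ n) :
    Nat.card {G : SimpleGraph (Fin n) // G.IsTree} = n ^ (n - 2) := by
  obtain ⟨m, rfl⟩ : ∃ m, n = m + 1 := ⟨n - 1, by omega⟩
  have e : {G : SimpleGraph (Fin (m + 1)) // G.IsTree} ≃
      {l : List (Fin (m + 1)) // l.length = (m + 1) - 2} :=
    { toFun := fun G => ⟨Cayley.code G.1, (Cayley.thmA m G.1 G.2).1⟩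
      invFun := fun c => ⟨Cayley.decode c.1, (Cayley.thmB m c.1 c.2).1⟩
      left_inv := fun G => Subtype.ext (Cayley.thmA m G.1 G.2).2.2
      right_inv := fun c => Subtype.ext (Cayley.thmB m c.1 c.2).2 }
  have e2 : {l : List (Fin (m + 1)) // l.length = (m + 1) - 2} ≃
      (Fin ((m + 1) - 2) → Fin (m + 1)) := Equiv.vectorEquivFin _ _
  rw [Nat.card_congr (e.trans e2), Nat.card_eq_fintype_card, Fintype.card_fun]
  simp
end

section
/- Recollision cone estimate: let x_p ≠ x_q in ℝ^d and ε, τ > 0. The set of relative velocities u = v_p - v_q ∈ ℝ^d with |u| ≤ R for which there exists a time 0 < s ≤ τ with |x_p - x_q - u s| ≤ ε is contained in a cone around the direction (x_p - x_q)/|x_p - x_q| whose intersection with the ball of radius R has Lebesgue measure at most C_d R^d (ε/|x_p - x_q|)^{d-1} for a dimensional constant C_d, provided ε ≤ |x_p-x_q|/2. -/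
open MeasureTheory

variable {d : ℕ}

local notation "E" d => EuclideanSpace ℝ (Fin d)

noncomputable def coneMap (d : ℕ) (w : EuclideanSpace ℝ (Fin d)) (c : ℝ) :
    EuclideanSpace ℝ (Fin d) →ₗ[ℝ] EuclideanSpace ℝ (Fin d) :=
  c • LinearMap.id + LinearMap.smulRight (((1:ℝ) - c) • (innerSL ℝ w).toLinearMap) w

lemma coneMap_apply (d : ℕ) (w : EuclideanSpace ℝ (Fin d)) (c : ℝ) (u : EuclideanSpace ℝ (Fin d)) :
    coneMap d w c u = c • u + (((1:ℝ) - c) * (inner ℝ w u : ℝ)) • w := by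
  simp [coneMap, LinearMap.smulRight_apply]

lemma coneMap_det (d : ℕ) (hd : 1 ≤ d) (w : EuclideanSpace ℝ (Fin d)) (hw : ‖w‖ = 1) (c : ℝ) :
    LinearMap.det (coneMap d w c) = c ^ (d - 1) := by
  have hd0 : 0 < d := hd
  set i0 : Fin d := ⟨0, hd0⟩
  -- orthonormal singleton
  have hcard : Module.finrank ℝ (EuclideanSpace ℝ (Fin d)) = Fintype.card (Fin d) := by
    simp [finrank_euclideanSpace_fin]
  have hon : Orthonormal ℝ (Set.restrict ({i0} : Set (Fin d)) (fun _ => w)) := by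
    rw [orthonormal_iff_ite]
    intro i j
    have : i = j := Subsingleton.elim i j
    subst this
    rw [if_pos rfl]
    show (inner ℝ w w : ℝ) = 1
    rw [real_inner_self_eq_norm_sq, hw]; norm_num
  obtain ⟨b, hb⟩ := hon.exists_orthonormalBasis_extension_of_card_eq hcard
  have hb0 : b i0 = w := hb i0 (by simp)
  have hT : ∀ j, coneMap d w c (b j) = (if j = i0 then (1:ℝ) else c) • b j := by
    intro j
    have hinner : (inner ℝ w (b j) : ℝ) = if j = i0 then 1 else 0 := by
      rw [← hb0]
      rw [orthonormal_iff_ite.1 b.orthonormal i0 j]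
      simp [eq_comm]
    rw [coneMap_apply, hinner]
    by_cases h : j = i0
    · subst h
      simp [hb0]
    · simp [h]
  have hM : LinearMap.toMatrix b.toBasis b.toBasis (coneMap d w c)
      = Matrix.diagonal (fun i => if i = i0 then (1:ℝ) else c) := by
    ext i j
    rw [LinearMap.toMatrix_apply, OrthonormalBasis.coe_toBasis]
    rw [hT j, _root_.map_smul]
    have : b j = b.toBasis j := (OrthonormalBasis.coe_toBasis b).symm ▸ rfl
    rw [this, Module.Basis.repr_self]
    by_cases h : i = j
    · subst h
      by_cases h0 : i = i0 <;> simp [Matrix.diagonal, h0]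
    · by_cases h0 : j = i0
      · have hi : ¬ i = i0 := fun hh => h (hh.trans h0.symm)
        simp [Matrix.diagonal, h, Ne.symm h, h0, hi, Finsupp.single_apply, eq_comm]
      · simp [Matrix.diagonal, h, Ne.symm h, h0, Finsupp.single_apply, eq_comm]
  rw [← LinearMap.det_toMatrix b.toBasis, hM, Matrix.det_diagonal]
  rw [Fintype.prod_eq_prod_compl_mul i0]
  rw [Finset.prod_congr rfl (fun i hi => by
    simp only [Finset.mem_compl, Finset.mem_singleton] at hi
    simp [hi] : ∀ i ∈ ({i0} : Finset (Fin d))ᶜ, (if i = i0 then (1:ℝ) else c) = c)]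
  simp [Finset.prod_const, Finset.card_compl]

set_option maxHeartbeats 1000000 in
/-- Recollision cone estimate: for `x_p ≠ x_q` and `0 < ε ≤ |x_p - x_q|/2`, the set of
relative velocities `u` with `|u| ≤ R` leading to a recollision within time `τ`
(i.e. `|x_p - x_q - s u| ≤ ε` for some `0 < s ≤ τ`) has Lebesgue measure at most
`C_d R^d (ε/|x_p - x_q|)^(d-1)` for a dimensional constant `C_d`. -/
theorem recollision_cone_estimate (d : ℕ) (hd : 2 ≤ d) :
    ∃ C : ℝ, 0 < C ∧
      ∀ (xp xq : EuclideanSpace ℝ (Fin d)) (R τ ε : ℝ),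
        xp ≠ xq → 0 < R → 0 < τ → 0 < ε → ε ≤ ‖xp - xq‖ / 2 →
        volume {u : EuclideanSpace ℝ (Fin d) |
            ‖u‖ ≤ R ∧ ∃ s ∈ Set.Ioc (0 : ℝ) τ, ‖xp - xq - s • u‖ ≤ ε}
          ≤ ENNReal.ofReal (C * R ^ d * (ε / ‖xp - xq‖) ^ (d - 1)) := by
  set V : ℝ := (volume (Metric.ball (0 : EuclideanSpace ℝ (Fin d)) 1)).toReal with hV
  have hV0 : 0 ≤ V := ENNReal.toReal_nonneg
  refine ⟨2 ^ (2 * d) * (V + 1), by positivity, ?_⟩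
  intro xp xq R τ ε hne hR hτ hε hεL
  set w : EuclideanSpace ℝ (Fin d) := xp - xq with hw
  have hLpos : 0 < ‖w‖ := norm_pos_iff.2 (sub_ne_zero.2 hne)
  set L : ℝ := ‖w‖ with hL
  obtain ⟨wu, hwun, hweq⟩ : ∃ v : EuclideanSpace ℝ (Fin d), ‖v‖ = 1 ∧ w = L • v := by
    refine ⟨L⁻¹ • w, ?_, ?_⟩
    · rw [norm_smul, Real.norm_eq_abs, abs_of_pos (inv_pos.2 hLpos)]
      field_simp
      exact hL.symm
    · rw [smul_smul, mul_inv_cancel₀ hLpos.ne', one_smul]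
  set c : ℝ := 2 * ε / L with hc
  have hcpos : 0 < c := by positivity
  -- the subset inclusion
  have hsub : {u : EuclideanSpace ℝ (Fin d) |
      ‖u‖ ≤ R ∧ ∃ s ∈ Set.Ioc (0 : ℝ) τ, ‖xp - xq - s • u‖ ≤ ε} ⊆
      (coneMap d wu c) '' (Metric.closedBall 0 (Real.sqrt 2 * R)) := by
    rintro u ⟨hu, s, ⟨hs0, hsτ⟩, hsu⟩
    set a : ℝ := inner ℝ wu u with ha
    obtain ⟨b, hab, horth⟩ : ∃ b : EuclideanSpace ℝ (Fin d),
        u = a • wu + b ∧ (inner ℝ wu b : ℝ) = 0 := by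
      refine ⟨u - a • wu, by module, ?_⟩
      rw [inner_sub_right, real_inner_smul_right, real_inner_self_eq_norm_sq, hwun, ← ha]
      ring
    set P : ℝ := ‖b‖ with hP
    have hP0 : 0 ≤ P := norm_nonneg b
    have hkey : (L - s * a) ^ 2 + s ^ 2 * P ^ 2 ≤ ε ^ 2 := by
      have h1 : ‖xp - xq - s • u‖ ^ 2 ≤ ε ^ 2 := pow_le_pow_left₀ (norm_nonneg _) hsu 2
      have e1 : xp - xq - s • u = (L - s * a) • wu - s • b := by
        rw [← hw, hweq]; nth_rewrite 1 [hab]; module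
      have e2 : (inner ℝ ((L - s * a) • wu) (s • b) : ℝ) = 0 := by
        rw [real_inner_smul_left, real_inner_smul_right, horth]; ring
      have e3 : ‖xp - xq - s • u‖ ^ 2 = (L - s * a) ^ 2 + s ^ 2 * P ^ 2 := by
        rw [e1, norm_sub_sq_real, e2, norm_smul, norm_smul, hwun,
          Real.norm_eq_abs, Real.norm_eq_abs, mul_pow, mul_pow, sq_abs, sq_abs]
        ring
      linarith [e3 ▸ h1]
    have hεL' : ε ≤ L / 2 := hεL
    have hLa : L - s * a ≤ ε := by nlinarith [sq_nonneg (s * P), hε]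
    have hsa : L / 2 ≤ s * a := by linarith
    have ha_le : a ≤ R := by
      have := real_inner_le_norm wu u
      rw [hwun, one_mul] at this
      exact le_trans (ha ▸ this) hu
    have ha_abs : |a| ≤ R := by
      have := abs_real_inner_le_norm wu u
      rw [hwun, one_mul] at this
      exact le_trans (ha ▸ this) hu
    have hL2Rs : L ≤ 2 * R * s := by nlinarith
    have hsP : s * P ≤ ε := by
      have hsq : (s * P) ^ 2 ≤ ε ^ 2 := by nlinarith [sq_nonneg (L - s * a)]
      have hnn : 0 ≤ s * P := mul_nonneg hs0.le hP0
      nlinarith [hsq, hnn, hε]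
    have hPcR : P ≤ c * R := by
      rw [hc, div_mul_eq_mul_div, le_div_iff₀ hLpos]
      have t1 : P * L ≤ P * (2 * R * s) := mul_le_mul_of_nonneg_left hL2Rs hP0
      have t2 : (2 * R) * (s * P) ≤ (2 * R) * ε := by
        apply mul_le_mul_of_nonneg_left hsP (by positivity)
      linarith [t1, t2]
    refine ⟨a • wu + c⁻¹ • b, ?_, ?_⟩
    · rw [Metric.mem_closedBall, dist_zero_right]
      have e4 : (inner ℝ (a • wu) (c⁻¹ • b) : ℝ) = 0 := by
        rw [real_inner_smul_left, real_inner_smul_right, horth]; ring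
      have e5 : ‖a • wu + c⁻¹ • b‖ ^ 2 = a ^ 2 + c⁻¹ ^ 2 * P ^ 2 := by
        rw [norm_add_sq_real, e4, norm_smul, norm_smul, hwun,
          Real.norm_eq_abs, Real.norm_eq_abs, mul_pow, mul_pow, sq_abs, sq_abs]
        ring
      have hcinvP : c⁻¹ * P ≤ R := by
        rw [inv_mul_le_iff₀ hcpos]
        linarith [hPcR]
      have h2 : ‖a • wu + c⁻¹ • b‖ ^ 2 ≤ (Real.sqrt 2 * R) ^ 2 := by
        rw [e5, mul_pow, Real.sq_sqrt (by norm_num : (0:ℝ) ≤ 2)]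
        have q1 : a ^ 2 ≤ R ^ 2 := by nlinarith [sq_abs a, abs_nonneg a, ha_abs]
        have q2 : c⁻¹ ^ 2 * P ^ 2 ≤ R ^ 2 := by
          nlinarith [hcinvP, mul_nonneg (inv_nonneg.2 hcpos.le) hP0]
        linarith
      calc ‖a • wu + c⁻¹ • b‖ = Real.sqrt (‖a • wu + c⁻¹ • b‖ ^ 2) :=
            (Real.sqrt_sq (norm_nonneg _)).symm
        _ ≤ Real.sqrt ((Real.sqrt 2 * R) ^ 2) := Real.sqrt_le_sqrt h2
        _ = Real.sqrt 2 * R := Real.sqrt_sq (by positivity)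
    · rw [coneMap_apply]
      have hinx : (inner ℝ wu (a • wu + c⁻¹ • b) : ℝ) = a := by
        rw [inner_add_right, real_inner_smul_right, real_inner_smul_right, horth,
          real_inner_self_eq_norm_sq, hwun]
        ring
      rw [hinx]
      have hcc : c • (c⁻¹ • b) = b := by
        rw [smul_smul, mul_inv_cancel₀ hcpos.ne', one_smul]
      rw [smul_add, hcc]
      rw [hab]
      module
  -- measure estimate
  have hfr : Module.finrank ℝ (EuclideanSpace ℝ (Fin d)) = d := finrank_euclideanSpace_fin
  calc volume {u : EuclideanSpace ℝ (Fin d) |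
        ‖u‖ ≤ R ∧ ∃ s ∈ Set.Ioc (0 : ℝ) τ, ‖xp - xq - s • u‖ ≤ ε}
      ≤ volume ((coneMap d wu c) '' (Metric.closedBall 0 (Real.sqrt 2 * R))) :=
        measure_mono hsub
    _ = ENNReal.ofReal |LinearMap.det (coneMap d wu c)| *
        volume (Metric.closedBall (0 : EuclideanSpace ℝ (Fin d)) (Real.sqrt 2 * R)) :=
        Measure.addHaar_image_linearMap volume _ _
    _ = ENNReal.ofReal (c ^ (d - 1)) *
        (ENNReal.ofReal ((Real.sqrt 2 * R) ^ d) *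
          volume (Metric.ball (0 : EuclideanSpace ℝ (Fin d)) 1)) := by
        rw [coneMap_det d (by omega) wu hwun c,
          abs_of_nonneg (pow_nonneg hcpos.le _),
          Measure.addHaar_closedBall volume _ (by positivity : (0:ℝ) ≤ Real.sqrt 2 * R), hfr]
    _ = ENNReal.ofReal (c ^ (d - 1) * ((Real.sqrt 2 * R) ^ d * V)) := by
        rw [show volume (Metric.ball (0 : EuclideanSpace ℝ (Fin d)) 1) = ENNReal.ofReal V from
            (ENNReal.ofReal_toReal measure_ball_lt_top.ne).symm,
          ← ENNReal.ofReal_mul (by positivity), ← ENNReal.ofReal_mul (by positivity)]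
    _ ≤ ENNReal.ofReal (2 ^ (2 * d) * (V + 1) * R ^ d * (ε / L) ^ (d - 1)) := by
        apply ENNReal.ofReal_le_ofReal
        have h1 : c ^ (d - 1) = 2 ^ (d - 1) * (ε / L) ^ (d - 1) := by
          rw [← mul_pow, hc, mul_div_assoc]
        have h2 : (Real.sqrt 2 : ℝ) ≤ 2 := by
          nlinarith [Real.sq_sqrt (show (0:ℝ) ≤ 2 by norm_num), Real.sqrt_nonneg 2]
        have h3 : (Real.sqrt 2 * R) ^ d ≤ 2 ^ d * R ^ d := by
          rw [← mul_pow]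
          exact pow_le_pow_left₀ (by positivity) (by nlinarith) d
        have h4 : (2:ℝ) ^ (d - 1) ≤ 2 ^ d := pow_le_pow_right₀ (by norm_num) (by omega)
        have h5 : (0:ℝ) ≤ (ε / L) ^ (d - 1) := by positivity
        have h6 : (2:ℝ) ^ d * 2 ^ d = 2 ^ (2 * d) := by rw [← pow_add, two_mul]
        calc c ^ (d - 1) * ((Real.sqrt 2 * R) ^ d * V)
            ≤ (2 ^ d * (ε / L) ^ (d - 1)) * ((2 ^ d * R ^ d) * (V + 1)) := by
              rw [h1]
              gcongr <;> first | positivity | linarith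
          _ = 2 ^ (2 * d) * (V + 1) * R ^ d * (ε / L) ^ (d - 1) := by
              rw [← h6]; ring
end
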